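/- Let θ ∈ [0, π] and let (G, Ĝ) be a bivariate Gaussian random vector with standard normal marginals and covariance E[G·Ĝ] = cos θ. Then E[φ(G)·φ(Ĝ)] = (sin θ + (π − θ)·cos θ) / (2π), where φ(x) = max(x, 0) is the ReLU function. -/

import Mathlib

open MeasureTheory ProbabilityTheory Real

/-- The ReLU function `φ(x) = max(x, 0)`. -/
noncomputable def relu (x : ℝ) : ℝ := max x 0

/-- The joint law of a bivariate Gaussian vector `(G, Ĝ)` with standard normal marginals
and covariance `E[G·Ĝ] = cos θ`, realized as `G = Z₁`, `Ĝ = cos θ · Z₁ + sin θ · Z₂` for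
independent standard normals `Z₁, Z₂`. -/
noncomputable def bivGaussian (θ : ℝ) : Measure (ℝ × ℝ) :=
  Measure.map (fun z : ℝ × ℝ => (z.1, Real.cos θ * z.1 + Real.sin θ * z.2))
    ((gaussianReal 0 1).prod (gaussianReal 0 1))

lemma relu_of_nonpos {x : ℝ} (h : x ≤ 0) : relu x = 0 := max_eq_right h

lemma relu_of_nonneg {x : ℝ} (h : 0 ≤ x) : relu x = x := max_eq_left h

lemma relu_const_mul {r : ℝ} (hr : 0 ≤ r) (x : ℝ) : relu (r * x) = r * relu x := by
  unfold relu
  rw [mul_max_of_nonneg _ _ hr, mul_zero]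

lemma continuous_relu : Continuous relu := continuous_id.max continuous_const

/-- The radial integral `∫_0^∞ r³ e^{-r²/2} dr = 2`. -/
lemma radial_integral : ∫ r in Set.Ioi (0:ℝ), r ^ 3 * rexp (-(r ^ 2) / 2) = 2 := by
  have hderiv : ∀ r ∈ Set.Ioi (0:ℝ),
      HasDerivAt (fun r : ℝ => -(r ^ 2 + 2) * rexp (-(r ^ 2) / 2))
        (r ^ 3 * rexp (-(r ^ 2) / 2)) r := by
    intro r _
    have h1 : HasDerivAt (fun r : ℝ => -(r ^ 2 + 2)) (-(2 * r)) r := by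
      exact ((hasDerivAt_pow 2 r).add_const 2).neg.congr_deriv (by norm_num)
    have hin : HasDerivAt (fun r : ℝ => -(r ^ 2) / 2) (-r) r := by
      have := ((hasDerivAt_pow 2 r).neg.div_const 2)
      simpa using this.congr_deriv (by ring)
    have h2 : HasDerivAt (fun r : ℝ => rexp (-(r ^ 2) / 2))
        (rexp (-(r ^ 2) / 2) * (-r)) r := (Real.hasDerivAt_exp _).comp r hin
    have := h1.mul h2
    refine this.congr_deriv ?_
    ring
  have hint : IntegrableOn (fun r : ℝ => r ^ 3 * rexp (-(r ^ 2) / 2)) (Set.Ioi 0) := by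
    have h := integrableOn_rpow_mul_exp_neg_mul_sq (b := 1/2) (by norm_num) (s := 3) (by norm_num)
    refine h.congr_fun ?_ measurableSet_Ioi
    intro x hx
    have hx3 : x ^ (3:ℝ) = x ^ (3:ℕ) := by
      rw [← Real.rpow_natCast x 3]; norm_num
    simp only [hx3]
    norm_num
    left
    ring
  have htends : Filter.Tendsto (fun r : ℝ => -(r ^ 2 + 2) * rexp (-(r ^ 2) / 2))
      Filter.atTop (nhds 0) := by
    have hcomp : Filter.Tendsto (fun r : ℝ => r ^ 2 / 2) Filter.atTop Filter.atTop := by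
      apply Filter.Tendsto.atTop_div_const (by norm_num)
      exact Filter.tendsto_pow_atTop (by norm_num)
    have h1 : Filter.Tendsto (fun u : ℝ => -(2 * u + 2) * rexp (-u)) Filter.atTop (nhds 0) := by
      have ha : Filter.Tendsto (fun u : ℝ => u * rexp (-u)) Filter.atTop (nhds 0) := by
        simpa using Real.tendsto_pow_mul_exp_neg_atTop_nhds_zero 1
      have hb : Filter.Tendsto (fun u : ℝ => rexp (-u)) Filter.atTop (nhds 0) :=
        Real.tendsto_exp_neg_atTop_nhds_zero
      have := ((ha.const_mul (-2)).add (hb.const_mul (-2)))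
      simpa using this.congr (fun u => by ring)
    have := h1.comp hcomp
    refine this.congr (fun r => ?_)
    simp only [Function.comp]
    have : -(r ^ 2 / 2) = -(r ^ 2) / 2 := by ring
    rw [this]
    ring
  have := integral_Ioi_of_hasDerivAt_of_tendsto (a := 0)
      (f := fun r : ℝ => -(r ^ 2 + 2) * rexp (-(r ^ 2) / 2))
      (f' := fun r : ℝ => r ^ 3 * rexp (-(r ^ 2) / 2))
      (Continuous.continuousWithinAt (by continuity)) hderiv hint htends
  rw [this]
  norm_num

/-- The angular integral. -/
lemma angular_integral (θ : ℝ) (h0 : 0 ≤ θ) (h1 : θ ≤ π) :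
    ∫ t in Set.Ioo (-π) π, relu (Real.cos t) * relu (Real.cos (t - θ))
      = (Real.sin θ + (π - θ) * Real.cos θ) / 2 := by
  have hπ := Real.pi_pos
  have hstep : ∀ t ∈ Set.Ioo (-π) π,
      relu (Real.cos t) * relu (Real.cos (t - θ))
        = Set.indicator (Set.Ioo (θ - π/2) (π/2))
            (fun t => Real.cos t * Real.cos (t - θ)) t := by
    intro t ht
    by_cases hmem : t ∈ Set.Ioo (θ - π/2) (π/2)
    · rw [Set.indicator_of_mem hmem]
      have hc1 : 0 ≤ Real.cos t := by
        apply Real.cos_nonneg_of_mem_Icc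
        constructor
        · linarith [hmem.1]
        · linarith [hmem.2]
      have hc2 : 0 ≤ Real.cos (t - θ) := by
        apply Real.cos_nonneg_of_mem_Icc
        constructor
        · linarith [hmem.1]
        · linarith [hmem.2, h0]
      rw [relu_of_nonneg hc1, relu_of_nonneg hc2]
    · rw [Set.indicator_of_notMem hmem]
      rw [Set.mem_Ioo, not_and_or, not_lt, not_lt] at hmem
      rcases hmem with hle | hge
      · -- t ≤ θ - π/2
        rcases le_or_gt (θ - 3 * (π/2)) t with hcase | hcase
        · have : Real.cos (t - θ) ≤ 0 := by
            rw [← Real.cos_neg, neg_sub]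
            apply Real.cos_nonpos_of_pi_div_two_le_of_le
            · linarith
            · linarith
          rw [relu_of_nonpos this, mul_zero]
        · have : Real.cos t ≤ 0 := by
            rw [← Real.cos_neg]
            apply Real.cos_nonpos_of_pi_div_two_le_of_le
            · linarith [ht.1]
            · linarith [ht.1]
          rw [relu_of_nonpos this, zero_mul]
      · -- π/2 ≤ t
        have : Real.cos t ≤ 0 := by
          apply Real.cos_nonpos_of_pi_div_two_le_of_le hge
          linarith [ht.2]
        rw [relu_of_nonpos this, zero_mul]
  rw [setIntegral_congr_fun measurableSet_Ioo hstep,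
    setIntegral_indicator measurableSet_Ioo]
  have hsub : Set.Ioo (-π) π ∩ Set.Ioo (θ - π/2) (π/2) = Set.Ioo (θ - π/2) (π/2) := by
    apply Set.inter_eq_self_of_subset_right
    intro x hx
    exact ⟨by linarith [hx.1], by linarith [hx.2]⟩
  rw [hsub]
  have hab : θ - π/2 ≤ π/2 := by linarith
  rw [← MeasureTheory.integral_Ioc_eq_integral_Ioo,
    ← intervalIntegral.integral_of_le hab]
  have hFTC : ∫ t in (θ - π/2)..(π/2), Real.cos t * Real.cos (t - θ)
      = (Real.sin (2 * (π/2) - θ) / 4 + (π/2) * Real.cos θ / 2)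
        - (Real.sin (2 * (θ - π/2) - θ) / 4 + (θ - π/2) * Real.cos θ / 2) := by
    refine intervalIntegral.integral_eq_sub_of_hasDerivAt
      (f := fun t => Real.sin (2 * t - θ) / 4 + t * Real.cos θ / 2) ?_ ?_
    · intro t _
      have hin : HasDerivAt (fun t : ℝ => 2 * t - θ) 2 t := by
        simpa using ((hasDerivAt_id t).const_mul 2).sub_const θ
      have hs : HasDerivAt (fun t : ℝ => Real.sin (2 * t - θ)) (Real.cos (2 * t - θ) * 2) t :=
        (Real.hasDerivAt_sin _).comp t hin
      have h2 := ((hs.div_const 4).add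
        (((hasDerivAt_id t).mul_const (Real.cos θ)).div_const 2))
      refine h2.congr_deriv ?_
      rw [Real.cos_sub (2 * t) θ, Real.cos_sub t θ, Real.cos_two_mul, Real.sin_two_mul]
      ring
    · exact (Real.continuous_cos.mul
        (Real.continuous_cos.comp (continuous_id.sub continuous_const))).intervalIntegrable _ _
  rw [hFTC]
  have e1 : 2 * (π/2) - θ = π - θ := by ring
  have e2 : 2 * (θ - π/2) - θ = θ - π := by ring
  rw [e1, e2, Real.sin_pi_sub, Real.sin_sub_pi]
  ring

/-- The product of two standard gaussians as a density against 2D Lebesgue measure. -/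
lemma gaussian_prod_eq_withDensity :
    (gaussianReal 0 1).prod (gaussianReal 0 1)
      = (volume : Measure (ℝ × ℝ)).withDensity
          (fun p => gaussianPDF 0 1 p.1 * gaussianPDF 0 1 p.2) := by
  apply Measure.prod_eq
  intro s t hs ht
  rw [withDensity_apply _ (hs.prod ht), Measure.volume_eq_prod, ← Measure.prod_restrict,
    lintegral_prod_mul (measurable_gaussianPDF 0 1).aemeasurable
      (measurable_gaussianPDF 0 1).aemeasurable,
    ← gaussianReal_apply 0 one_ne_zero s, ← gaussianReal_apply 0 one_ne_zero t]

theorem relu_corr_moment {Ω : Type*} [MeasureSpace Ω] [IsProbabilityMeasure (ℙ : Measure Ω)]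
    (θ : ℝ) (hθ : θ ∈ Set.Icc 0 π) (G Ghat : Ω → ℝ)
    (hlaw : Measure.map (fun ω => (G ω, Ghat ω)) ℙ = bivGaussian θ) :
    ∫ ω, relu (G ω) * relu (Ghat ω) ∂ℙ = (Real.sin θ + (π - θ) * Real.cos θ) / (2 * π) := by
  obtain ⟨h0, h1⟩ := hθ
  have hπ := Real.pi_pos
  have hT : Measurable (fun z : ℝ × ℝ => (z.1, Real.cos θ * z.1 + Real.sin θ * z.2)) := by
    fun_prop
  have hF : Continuous (fun p : ℝ × ℝ => relu p.1 * relu p.2) :=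
    (continuous_relu.comp continuous_fst).mul (continuous_relu.comp continuous_snd)
  have hpair : AEMeasurable (fun ω => (G ω, Ghat ω)) ℙ := by
    by_contra h
    have h0' := Measure.map_of_not_aemeasurable h
    rw [hlaw] at h0'
    have hprob : IsProbabilityMeasure (bivGaussian θ) := by
      rw [bivGaussian]
      exact Measure.isProbabilityMeasure_map hT.aemeasurable
    have h1' := hprob.measure_univ
    rw [h0'] at h1'
    simp at h1'
  have hFc : Continuous
      (fun z : ℝ × ℝ => relu z.1 * relu (Real.cos θ * z.1 + Real.sin θ * z.2)) := by
    apply Continuous.mul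
    · exact continuous_relu.comp continuous_fst
    · exact continuous_relu.comp (by fun_prop)
  -- density facts
  have hpdf : ∀ x : ℝ, gaussianPDFReal 0 1 x = (Real.sqrt (2 * π))⁻¹ * rexp (-(x ^ 2) / 2) := by
    intro x
    unfold gaussianPDFReal
    norm_num
  have hpdf_nonneg : ∀ x : ℝ, 0 ≤ gaussianPDFReal 0 1 x := gaussianPDFReal_nonneg 0 1
  have hD : (fun p : ℝ × ℝ => gaussianPDF 0 1 p.1 * gaussianPDF 0 1 p.2)
      = fun p : ℝ × ℝ =>
        ((Real.toNNReal (gaussianPDFReal 0 1 p.1 * gaussianPDFReal 0 1 p.2) : NNReal) : ENNReal) := by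
    funext p
    rw [gaussianPDF, gaussianPDF, ← ENNReal.ofReal_mul (hpdf_nonneg _)]
    rfl
  have hDmeas : Measurable (fun p : ℝ × ℝ =>
      Real.toNNReal (gaussianPDFReal 0 1 p.1 * gaussianPDFReal 0 1 p.2)) := by
    apply Measurable.real_toNNReal
    exact ((measurable_gaussianPDFReal 0 1).comp measurable_fst).mul
      ((measurable_gaussianPDFReal 0 1).comp measurable_snd)
  calc ∫ ω, relu (G ω) * relu (Ghat ω) ∂ℙ
      = ∫ p : ℝ × ℝ, relu p.1 * relu p.2 ∂(Measure.map (fun ω => (G ω, Ghat ω)) ℙ) :=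
        (integral_map hpair hF.aestronglyMeasurable).symm
    _ = ∫ z : ℝ × ℝ, relu z.1 * relu (Real.cos θ * z.1 + Real.sin θ * z.2)
          ∂((gaussianReal 0 1).prod (gaussianReal 0 1)) := by
        rw [hlaw, bivGaussian]
        exact integral_map hT.aemeasurable hF.aestronglyMeasurable
    _ = ∫ z : ℝ × ℝ, (gaussianPDFReal 0 1 z.1 * gaussianPDFReal 0 1 z.2)
          * (relu z.1 * relu (Real.cos θ * z.1 + Real.sin θ * z.2)) ∂(volume : Measure (ℝ × ℝ)) := by
        rw [gaussian_prod_eq_withDensity, hD, integral_withDensity_eq_integral_smul hDmeas]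
        congr 1
        funext z
        rw [NNReal.smul_def, Real.coe_toNNReal _ (mul_nonneg (hpdf_nonneg _) (hpdf_nonneg _)),
          smul_eq_mul]
    _ = ∫ p in polarCoord.target,
          p.1 • ((gaussianPDFReal 0 1 (polarCoord.symm p).1
              * gaussianPDFReal 0 1 (polarCoord.symm p).2)
            * (relu (polarCoord.symm p).1
              * relu (Real.cos θ * (polarCoord.symm p).1
                  + Real.sin θ * (polarCoord.symm p).2))) :=
        (integral_comp_polarCoord_symm _).symm
    _ = ∫ p in Set.Ioi (0:ℝ) ×ˢ Set.Ioo (-π) π,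
          (p.1 ^ 3 * rexp (-(p.1 ^ 2) / 2))
            * ((2 * π)⁻¹ * (relu (Real.cos p.2) * relu (Real.cos (p.2 - θ)))) := by
        rw [show polarCoord.target = Set.Ioi (0:ℝ) ×ˢ Set.Ioo (-π) π from rfl]
        apply setIntegral_congr_fun (measurableSet_Ioi.prod measurableSet_Ioo)
        rintro ⟨r, t⟩ ⟨hr, _⟩
        have hr' : (0:ℝ) < r := hr
        have hsymm : polarCoord.symm (r, t) = (r * Real.cos t, r * Real.sin t) := rfl
        simp only [hsymm]
        have harg : Real.cos θ * (r * Real.cos t) + Real.sin θ * (r * Real.sin t)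
            = r * Real.cos (t - θ) := by
          rw [Real.cos_sub]
          ring
        have hsq2 : (r * Real.cos t) ^ 2 + (r * Real.sin t) ^ 2 = r ^ 2 := by
          have := Real.sin_sq_add_cos_sq t
          nlinarith [this]
        rw [harg, relu_const_mul hr'.le, relu_const_mul hr'.le, hpdf, hpdf]
        rw [smul_eq_mul]
        have hexp : rexp (-((r * Real.cos t) ^ 2) / 2) * rexp (-((r * Real.sin t) ^ 2) / 2)
            = rexp (-(r ^ 2) / 2) := by
          rw [← Real.exp_add, ← hsq2]
          ring_nf
        have hsqrt : (Real.sqrt (2 * π))⁻¹ * (Real.sqrt (2 * π))⁻¹ = (2 * π)⁻¹ := by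
          rw [← mul_inv, Real.mul_self_sqrt (by positivity)]
        calc r * ((Real.sqrt (2 * π))⁻¹ * rexp (-((r * Real.cos t) ^ 2) / 2)
              * ((Real.sqrt (2 * π))⁻¹ * rexp (-((r * Real.sin t) ^ 2) / 2))
              * (r * relu (Real.cos t) * (r * relu (Real.cos (t - θ)))))
            = ((Real.sqrt (2 * π))⁻¹ * (Real.sqrt (2 * π))⁻¹)
              * (rexp (-((r * Real.cos t) ^ 2) / 2) * rexp (-((r * Real.sin t) ^ 2) / 2))
              * (r ^ 3 * (relu (Real.cos t) * relu (Real.cos (t - θ)))) := by ring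
          _ = (r ^ 3 * rexp (-(r ^ 2) / 2))
              * ((2 * π)⁻¹ * (relu (Real.cos t) * relu (Real.cos (t - θ)))) := by
              rw [hexp, hsqrt]
              ring
    _ = (∫ r in Set.Ioi (0:ℝ), r ^ 3 * rexp (-(r ^ 2) / 2))
          * ∫ t in Set.Ioo (-π) π, (2 * π)⁻¹ * (relu (Real.cos t) * relu (Real.cos (t - θ))) := by
        rw [Measure.volume_eq_prod, ← Measure.prod_restrict]
        exact integral_prod_mul (f := fun r : ℝ => r ^ 3 * rexp (-(r ^ 2) / 2))
          (g := fun t : ℝ => (2 * π)⁻¹ * (relu (Real.cos t) * relu (Real.cos (t - θ))))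
    _ = 2 * ((2 * π)⁻¹ * ((Real.sin θ + (π - θ) * Real.cos θ) / 2)) := by
        rw [radial_integral, integral_const_mul, angular_integral θ h0 h1]
    _ = (Real.sin θ + (π - θ) * Real.cos θ) / (2 * π) := by
        field_simp
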